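/- Rounding a fractional satisfying point: let c : {−1,1}^n → {0,1} be a Boolean function and a ∈ [−1,1]^n with WFE_c(a) = 1. Then every b ∈ {−1,1}^n with S_a(b) > 0 satisfies c(b) = 1; that is, any rounding of a that is consistent with the ±1 coordinates of a yields a satisfying assignment of c. -/
import Mathlib


open Finset

/-- Map a Bool vector to a ±1 real vector: `true` (logical True) ↦ -1, `false` ↦ 1. -/
noncomputable def toPM {n : ℕ} (b : Fin n → Bool) : Fin n → ℝ :=
  fun i => if b i then -1 else 1

/-- Walsh–Fourier coefficient ĝ(S) = 2^{-n} · Σ_{b∈{-1,1}^n} g(b) · ∏_{i∈S} b_i. -/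
noncomputable def wfCoeff {n : ℕ} (g : (Fin n → Bool) → ℝ) (S : Finset (Fin n)) : ℝ :=
  (2 ^ n : ℝ)⁻¹ * ∑ b : Fin n → Bool, g b * ∏ i ∈ S, toPM b i

/-- Walsh–Fourier expansion (multilinear extension) of g. -/
noncomputable def WFE {n : ℕ} (g : (Fin n → Bool) → ℝ) (x : Fin n → ℝ) : ℝ :=
  ∑ S : Finset (Fin n), wfCoeff g S * ∏ i ∈ S, x i

/-- Real {0,1} value of a Boolean function (1 = True). -/
noncomputable def bval {n : ℕ} (c : (Fin n → Bool) → Bool) : (Fin n → Bool) → ℝ :=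
  fun b => if c b then 1 else 0

/-- Rounding distribution S_a(b) = ∏_{b_i = -1} (1-a_i)/2 · ∏_{b_i = +1} (1+a_i)/2. -/
noncomputable def roundProb {n : ℕ} (a : Fin n → ℝ) (b : Fin n → Bool) : ℝ :=
  ∏ i, if b i then (1 - a i) / 2 else (1 + a i) / 2

/-- Circuit-output probability COP(P,c). -/
noncomputable def COP {n : ℕ} (P : Fin n → ℝ) (c : (Fin n → Bool) → Bool) : ℝ :=
  ∑ b : Fin n → Bool, bval c b * ∏ i, (if b i then P i else 1 - P i)

private lemma roundProb_eq {n : ℕ} (a : Fin n → ℝ) (b : Fin n → Bool) :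
    roundProb a b = (2 ^ n : ℝ)⁻¹ * ∑ S : Finset (Fin n),
      (∏ i ∈ S, toPM b i) * ∏ i ∈ S, a i := by
  have h1 : roundProb a b = ∏ i : Fin n, (toPM b i * a i + 1) / 2 := by
    unfold roundProb toPM
    refine Finset.prod_congr rfl fun i _ => ?_
    by_cases h : b i <;> simp [h] <;> ring
  have h2 : ∏ i : Fin n, (toPM b i * a i + 1) / 2
      = (2 ^ n : ℝ)⁻¹ * ∏ i : Fin n, (toPM b i * a i + 1) := by
    rw [Finset.prod_div_distrib, Finset.prod_const, div_eq_inv_mul]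
    simp [Finset.card_univ]
  rw [h1, h2, Finset.prod_add]
  congr 1
  rw [Finset.powerset_univ]
  exact Finset.sum_congr rfl fun S _ => by rw [Finset.prod_mul_distrib]; simp

private lemma sum_mul_roundProb {n : ℕ} (g : (Fin n → Bool) → ℝ) (a : Fin n → ℝ) :
    ∑ b : Fin n → Bool, g b * roundProb a b = WFE g a := by
  unfold WFE wfCoeff
  simp only [roundProb_eq, Finset.mul_sum, Finset.sum_mul]
  rw [Finset.sum_comm]
  refine Finset.sum_congr rfl fun S _ => Finset.sum_congr rfl fun b _ => by ring

private lemma roundProb_nonneg {n : ℕ} {a : Fin n → ℝ}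
    (ha : ∀ i, a i ∈ Set.Icc (-1 : ℝ) 1) (b : Fin n → Bool) :
    0 ≤ roundProb a b := by
  refine Finset.prod_nonneg fun i _ => ?_
  obtain ⟨h1, h2⟩ := ha i
  by_cases h : b i <;> simp [h] <;> linarith

private lemma sum_roundProb {n : ℕ} (a : Fin n → ℝ) :
    ∑ b : Fin n → Bool, roundProb a b = 1 := by
  unfold roundProb
  rw [← Fintype.piFinset_univ,
    ← Finset.prod_univ_sum (fun _ => (Finset.univ : Finset Bool))
      (fun i t => if t then (1 - a i) / 2 else (1 + a i) / 2)]
  have h : ∀ i ∈ (Finset.univ : Finset (Fin n)),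
      (∑ t : Bool, if t then (1 - a i) / 2 else (1 + a i) / 2) = 1 := by
    intro i _; simp [Fintype.sum_bool]; ring
  rw [Finset.prod_congr rfl h, Finset.prod_const_one]

/-- Rounding a fractional satisfying point: any rounding of a with positive
probability satisfies c. -/
theorem rounding_fractional_solution {n : ℕ} (c : (Fin n → Bool) → Bool)
    (a : Fin n → ℝ) (ha : ∀ i, a i ∈ Set.Icc (-1 : ℝ) 1)
    (hW : WFE (bval c) a = 1) :
    ∀ b : Fin n → Bool, 0 < roundProb a b → c b = true := by
  intro b0 hb0
  by_contra hc
  have hc' : c b0 = false := by simpa using hc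
  have key : ∑ b : Fin n → Bool, bval c b * roundProb a b = 1 := by
    rw [sum_mul_roundProb]; exact hW
  have hlt : ∑ b : Fin n → Bool, bval c b * roundProb a b
      < ∑ b : Fin n → Bool, roundProb a b := by
    refine Finset.sum_lt_sum (fun b _ => ?_) ⟨b0, Finset.mem_univ b0, ?_⟩
    · have := roundProb_nonneg ha b
      unfold bval
      by_cases h : c b <;> simp [h, this]
    · unfold bval
      simp [hc', hb0]
  rw [sum_roundProb, key] at hlt
  exact lt_irrefl 1 hlt
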